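/- Let k ≥ 4 be even and n sufficiently large. If H is a k-uniform hypergraph on n vertices with at least 2k²·C(n−2, k−2) edges such that H is not contained in a star (the family of all k-sets containing a fixed vertex), then there exist three edges e₁, e₂, e₃ of H with e₁ ∩ (e₂ ∪ e₃) = ∅ and |e₂ ∩ e₃| ∈ {0, k/2}. -/

import Mathlib

open Finset

variable {n : ℕ}

/-- Number of r-sets in F containing a fixed set V is at most C(n-|V|, r-|V|). -/
lemma count_supersets (F : Finset (Finset (Fin n))) (r : ℕ)
    (hF : ∀ A ∈ F, A.card = r) (V : Finset (Fin n)) :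
    (F.filter (fun A => V ⊆ A)).card ≤ (n - V.card).choose (r - V.card) := by
  have h1 : (F.filter (fun A => V ⊆ A)).card ≤
      (((univ : Finset (Fin n)) \ V).powersetCard (r - V.card)).card := by
    apply Finset.card_le_card_of_injOn (fun A => A \ V)
    · intro A hA
      simp only [mem_coe, mem_filter] at hA
      simp only [Finset.mem_coe, Finset.mem_powersetCard]
      constructor
      · intro x hx; simp only [Finset.mem_sdiff] at hx ⊢
        exact ⟨Finset.mem_univ x, hx.2⟩
      · rw [Finset.card_sdiff_of_subset hA.2, hF A hA.1]
    · intro A hA B hB hAB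
      simp only [coe_filter, Set.mem_setOf_eq] at hA hB
      have : A \ V ∪ V = B \ V ∪ V := by simp only [] at hAB; rw [show A \ V = B \ V from hAB]
      rwa [Finset.sdiff_union_of_subset hA.2, Finset.sdiff_union_of_subset hB.2] at this
  rw [Finset.card_powersetCard] at h1
  have h2 : ((univ : Finset (Fin n)) \ V).card = n - V.card := by
    rw [Finset.card_sdiff_of_subset (Finset.subset_univ V), Finset.card_univ, Fintype.card_fin]
  rwa [h2] at h1

/-- Star dichotomy: an "intersecting beyond T" uniform family is small or a star beyond T. -/
lemma star_dichotomy (F : Finset (Finset (Fin n))) (r : ℕ) (T : Finset (Fin n))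
    (hF : ∀ A ∈ F, A.card = r) (hT : ∀ A ∈ F, T ⊆ A)
    (hint : ∀ A ∈ F, ∀ B ∈ F, ((A \ T) ∩ (B \ T)).Nonempty) :
    F.card ≤ (r - T.card)^2 * (n-2).choose (r - T.card - 2) ∨
      ∃ x, x ∉ T ∧ ∀ A ∈ F, x ∈ A := by
  by_cases hstar : ∃ x, x ∉ T ∧ ∀ A ∈ F, x ∈ A
  · exact Or.inr hstar
  left
  rcases F.eq_empty_or_nonempty with hFe | ⟨a₀, ha₀⟩
  · simp [hFe]
  push_neg at hstar
  have hf : ∀ u : Fin n, ∃ g, g ∈ F ∧ (u ∉ T → u ∉ g) := by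
    intro u
    by_cases hu : u ∈ T
    · exact ⟨a₀, ha₀, fun h => absurd hu h⟩
    · obtain ⟨g, hg, hug⟩ := hstar u hu
      exact ⟨g, hg, fun _ => hug⟩
  choose f hf1 hf2 using hf
  have cover : F ⊆ (a₀ \ T).biUnion (fun u => ((f u) \ T).biUnion
      (fun w => F.filter (fun A => insert u (insert w T) ⊆ A))) := by
    intro A hA
    obtain ⟨u, hu⟩ := hint A hA a₀ ha₀
    simp only [Finset.mem_inter, Finset.mem_sdiff] at hu
    obtain ⟨w, hw⟩ := hint A hA (f u) (hf1 u)
    simp only [Finset.mem_inter, Finset.mem_sdiff] at hw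
    rw [Finset.mem_biUnion]
    refine ⟨u, by simp [hu.2.1, hu.1.2], ?_⟩
    rw [Finset.mem_biUnion]
    refine ⟨w, by simp [hw.2.1, hw.2.2], ?_⟩
    rw [Finset.mem_filter]
    refine ⟨hA, ?_⟩
    intro x hx
    simp only [Finset.mem_insert] at hx
    rcases hx with rfl | rfl | hx
    · exact hu.1.1
    · exact hw.1.1
    · exact hT A hA hx
  have key : ∀ u w : Fin n, u ∉ T → w ∉ T → u ≠ w →
      (F.filter (fun A => insert u (insert w T) ⊆ A)).card ≤
        (n-2).choose (r - T.card - 2) := by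
    intro u w huT hwT huw
    have hcard : (insert u (insert w T)).card = T.card + 2 := by
      rw [Finset.card_insert_of_notMem (by simp [huT, huw]),
        Finset.card_insert_of_notMem hwT]
    calc (F.filter (fun A => insert u (insert w T) ⊆ A)).card
        ≤ (n - (insert u (insert w T)).card).choose (r - (insert u (insert w T)).card) :=
          count_supersets F r hF _
      _ ≤ (n-2).choose (r - T.card - 2) := by
          rw [hcard]
          have h1 : n - (T.card + 2) ≤ n - 2 := by omega
          have h2 : r - (T.card + 2) = r - T.card - 2 := by omega
          rw [h2]
          exact Nat.choose_le_choose _ h1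
  calc F.card ≤ ((a₀ \ T).biUnion (fun u => ((f u) \ T).biUnion
      (fun w => F.filter (fun A => insert u (insert w T) ⊆ A)))).card :=
        Finset.card_le_card cover
    _ ≤ ∑ u ∈ a₀ \ T, (((f u) \ T).biUnion
        (fun w => F.filter (fun A => insert u (insert w T) ⊆ A))).card :=
        Finset.card_biUnion_le
    _ ≤ ∑ u ∈ a₀ \ T, ∑ w ∈ (f u) \ T,
        (F.filter (fun A => insert u (insert w T) ⊆ A)).card :=
        Finset.sum_le_sum (fun u _ => Finset.card_biUnion_le)
    _ ≤ ∑ u ∈ a₀ \ T, ∑ w ∈ (f u) \ T, (n-2).choose (r - T.card - 2) := by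
        apply Finset.sum_le_sum
        intro u hu
        apply Finset.sum_le_sum
        intro w hw
        simp only [Finset.mem_sdiff] at hu hw
        exact key u w hu.2 hw.2 (fun h => (hf2 u hu.2) (h ▸ hw.1))
    _ ≤ (r - T.card)^2 * (n-2).choose (r - T.card - 2) := by
        have h1 : (a₀ \ T).card = r - T.card := by
          rw [Finset.card_sdiff_of_subset (hT a₀ ha₀), hF a₀ ha₀]
        have hfu : ∀ u, ((f u) \ T).card = r - T.card := fun u => by
          rw [Finset.card_sdiff_of_subset (hT _ (hf1 u)), hF _ (hf1 u)]
        apply le_of_eq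
        calc ∑ u ∈ a₀ \ T, ∑ _w ∈ (f u) \ T, (n-2).choose (r - T.card - 2)
            = ∑ u ∈ a₀ \ T, (r - T.card) * (n-2).choose (r - T.card - 2) := by
              apply Finset.sum_congr rfl
              intro u _
              rw [Finset.sum_const, hfu u, smul_eq_mul]
          _ = (r - T.card) * ((r - T.card) * (n-2).choose (r - T.card - 2)) := by
              rw [Finset.sum_const, h1, smul_eq_mul]
          _ = (r - T.card)^2 * (n-2).choose (r - T.card - 2) := by ring

/-- Number of t-sets T with S ⊆ T ⊆ U. -/
lemma card_between (S U : Finset (Fin n)) (hSU : S ⊆ U) (t : ℕ) (hSt : S.card ≤ t) :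
    ((U.powersetCard t).filter (fun T => S ⊆ T)).card =
      (U.card - S.card).choose (t - S.card) := by
  rw [show U.card - S.card = (U \ S).card from (Finset.card_sdiff_of_subset hSU).symm,
    ← Finset.card_powersetCard]
  apply Finset.card_bij' (fun T _ => T \ S) (fun W _ => W ∪ S)
  · intro T hT
    simp only [Finset.mem_filter, Finset.mem_powersetCard] at hT
    rw [Finset.mem_powersetCard]
    exact ⟨Finset.sdiff_subset_sdiff hT.1.1 (le_refl _),
      by rw [Finset.card_sdiff_of_subset hT.2, hT.1.2]⟩
  · intro W hW
    rw [Finset.mem_powersetCard] at hW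
    simp only [Finset.mem_filter, Finset.mem_powersetCard]
    have hWS : Disjoint W S := by
      apply Finset.disjoint_left.mpr
      intro a haW haS
      exact (Finset.mem_sdiff.mp (hW.1 haW)).2 haS
    refine ⟨⟨Finset.union_subset (hW.1.trans Finset.sdiff_subset) hSU, ?_⟩,
      Finset.subset_union_right⟩
    rw [Finset.card_union_of_disjoint hWS, hW.2]
    omega
  · intro T hT
    simp only [Finset.mem_filter] at hT
    exact Finset.sdiff_union_of_subset hT.2
  · intro W hW
    rw [Finset.mem_powersetCard] at hW
    have hWS : Disjoint W S := by
      apply Finset.disjoint_left.mpr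
      intro a haW haS
      exact (Finset.mem_sdiff.mp (hW.1 haW)).2 haS
    rw [Finset.union_sdiff_right, Finset.sdiff_eq_self_of_disjoint hWS]

/-- Greedy sunflower extraction with core exactly U. -/
lemma exists_sunflower (F : Finset (Finset (Fin n))) (t : ℕ) (ht : 1 ≤ t)
    (hF : ∀ A ∈ F, A.card = 2*t+1) (U : Finset (Fin n)) (hU : U.card = t+1)
    (hdeg : (2*t+2) * (t * n.choose (t-1) + 1) ≤ (F.filter (fun A => U ⊆ A)).card) :
    ∃ P ⊆ F.filter (fun A => U ⊆ A), P.card = 2*t+2 ∧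
      ∀ A ∈ P, ∀ B ∈ P, A ≠ B → A ∩ B = U := by
  set FU := F.filter (fun A => U ⊆ A) with hFU
  have hsub : ∀ A ∈ FU, U ⊆ A ∧ A ∈ F := by
    intro A hA
    rw [hFU, Finset.mem_filter] at hA
    exact ⟨hA.2, hA.1⟩
  have key : ∀ j, j ≤ 2*t+2 → ∃ P ⊆ FU, P.card = j ∧
      ∀ A ∈ P, ∀ B ∈ P, A ≠ B → A ∩ B = U := by
    intro j
    induction j with
    | zero => exact fun _ => ⟨∅, Finset.empty_subset _, Finset.card_empty, by simp⟩
    | succ j ih =>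
      intro hj
      obtain ⟨P, hPsub, hPcard, hPpair⟩ := ih (by omega)
      set Bad := FU.filter (fun B => ∃ A ∈ P, ((B \ U) ∩ (A \ U)).Nonempty) with hBad
      have hBadcard : Bad.card ≤ j * (t * n.choose (t-1)) := by
        have cover : Bad ⊆ P.biUnion (fun A => (A \ U).biUnion
            (fun y => FU.filter (fun B => y ∈ B))) := by
          intro B hB
          rw [hBad, Finset.mem_filter] at hB
          obtain ⟨hBFU, A, hAP, y, hy⟩ := hB
          simp only [Finset.mem_inter, Finset.mem_sdiff] at hy
          rw [Finset.mem_biUnion]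
          refine ⟨A, hAP, ?_⟩
          rw [Finset.mem_biUnion]
          exact ⟨y, Finset.mem_sdiff.mpr ⟨hy.2.1, hy.2.2⟩,
            Finset.mem_filter.mpr ⟨hBFU, hy.1.1⟩⟩
        calc Bad.card ≤ ∑ A ∈ P, ((A \ U).biUnion
              (fun y => FU.filter (fun B => y ∈ B))).card :=
            le_trans (Finset.card_le_card cover) Finset.card_biUnion_le
          _ ≤ ∑ A ∈ P, ∑ y ∈ A \ U, (FU.filter (fun B => y ∈ B)).card :=
            Finset.sum_le_sum (fun A _ => Finset.card_biUnion_le)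
          _ ≤ j * (t * n.choose (t-1)) := by
            have inner : ∀ A ∈ P, ∑ y ∈ A \ U, (FU.filter (fun B => y ∈ B)).card
                ≤ t * n.choose (t-1) := by
              intro A hAP
              have hAcard : (A \ U).card = t := by
                obtain ⟨hUA, hAF⟩ := hsub A (hPsub hAP)
                rw [Finset.card_sdiff_of_subset hUA, hF A hAF, hU]
                omega
              have each : ∀ y ∈ A \ U, (FU.filter (fun B => y ∈ B)).card ≤
                  n.choose (t-1) := by
                intro y hy
                have hyU : y ∉ U := (Finset.mem_sdiff.mp hy).2
                have step : FU.filter (fun B => y ∈ B) ⊆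
                    F.filter (fun B => insert y U ⊆ B) := by
                  intro B hB
                  simp only [hFU, Finset.mem_filter, and_assoc] at hB ⊢
                  exact ⟨hB.1, Finset.insert_subset hB.2.2 hB.2.1⟩
                calc (FU.filter (fun B => y ∈ B)).card
                    ≤ (F.filter (fun B => insert y U ⊆ B)).card :=
                      Finset.card_le_card step
                  _ ≤ (n - (insert y U).card).choose ((2*t+1) - (insert y U).card) :=
                      count_supersets F (2*t+1) hF _
                  _ ≤ n.choose (t-1) := by
                      rw [Finset.card_insert_of_notMem hyU, hU]
                      have : 2*t+1 - (t+1+1) = t-1 := by omega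
                      rw [this]
                      exact Nat.choose_le_choose _ (by omega)
              calc ∑ y ∈ A \ U, (FU.filter (fun B => y ∈ B)).card
                  ≤ ∑ _y ∈ A \ U, n.choose (t-1) := Finset.sum_le_sum each
                _ = t * n.choose (t-1) := by rw [Finset.sum_const, hAcard, smul_eq_mul]
            calc ∑ A ∈ P, ∑ y ∈ A \ U, (FU.filter (fun B => y ∈ B)).card
                ≤ ∑ _A ∈ P, t * n.choose (t-1) := Finset.sum_le_sum inner
              _ = j * (t * n.choose (t-1)) := by rw [Finset.sum_const, hPcard, smul_eq_mul]
      have hnew : ∃ B ∈ FU, B ∉ Bad := by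
        by_contra hc
        push_neg at hc
        have : FU ⊆ Bad := hc
        have h1 := Finset.card_le_card this
        have h2 : (2*t+2) * (t * n.choose (t-1) + 1) ≤ j * (t * n.choose (t-1)) := by
          omega
        nlinarith [Nat.zero_le (t * n.choose (t-1))]
      obtain ⟨B, hBFU, hBBad⟩ := hnew
      have hBP : B ∉ P := by
        intro hc
        apply hBBad
        rw [hBad, Finset.mem_filter]
        refine ⟨hBFU, B, hc, ?_⟩
        rw [Finset.inter_self]
        rw [← Finset.card_pos, Finset.card_sdiff_of_subset (hsub B hBFU).1,
          hF B (hsub B hBFU).2, hU]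
        omega
      refine ⟨insert B P, Finset.insert_subset hBFU hPsub, ?_, ?_⟩
      · rw [Finset.card_insert_of_notMem hBP, hPcard]
      · have hcore : ∀ A ∈ P, A ∩ B = U := by
          intro A hAP
          apply Finset.Subset.antisymm
          · intro x hx
            simp only [Finset.mem_inter] at hx
            by_contra hxU
            apply hBBad
            rw [hBad, Finset.mem_filter]
            exact ⟨hBFU, A, hAP, x, by
              simp only [Finset.mem_inter, Finset.mem_sdiff]
              exact ⟨⟨hx.2, hxU⟩, hx.1, hxU⟩⟩
          · exact Finset.subset_inter (hsub A (hPsub hAP)).1 (hsub B hBFU).1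
        intro A hA A' hA' hne
        simp only [Finset.mem_insert] at hA hA'
        rcases hA with rfl | hA <;> rcases hA' with rfl | hA'
        · exact absurd rfl hne
        · rw [Finset.inter_comm]; exact hcore A' hA'
        · exact hcore A hA
        · exact hPpair A hA A' hA' hne
  obtain ⟨P, h1, h2, h3⟩ := key (2*t+2) (le_refl _)
  exact ⟨P, h1, h2, h3⟩

/-- If U is the core of a (2t+2)-petal sunflower in a t-intersection-avoiding family,
then every member meets U in ≠ t points. -/
lemma core_forbidden (F : Finset (Finset (Fin n))) (t : ℕ) (ht : 1 ≤ t)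
    (hF : ∀ A ∈ F, A.card = 2*t+1)
    (hforb : ∀ A ∈ F, ∀ B ∈ F, A ≠ B → (A ∩ B).card ≠ t)
    (U : Finset (Fin n)) (hU : U.card = t+1)
    (P : Finset (Finset (Fin n))) (hP : P ⊆ F.filter (fun A => U ⊆ A))
    (hPcard : P.card = 2*t+2)
    (hPpair : ∀ A ∈ P, ∀ B ∈ P, A ≠ B → A ∩ B = U) :
    ∀ B ∈ F, (B ∩ U).card ≠ t := by
  intro B hB
  have hPmem : ∀ A ∈ P, A ∈ F ∧ U ⊆ A := by
    intro A hA
    have := hP hA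
    rw [Finset.mem_filter] at this
    exact this
  by_cases hUB : U ⊆ B
  · rw [Finset.inter_eq_right.mpr hUB, hU]
    omega
  · have hBne : B.Nonempty := by
      rw [← Finset.card_pos, hF B hB]; omega
    set Q := P.filter (fun A => (B ∩ (A \ U)).Nonempty) with hQ
    have hQcard : Q.card ≤ 2*t+1 := by
      have : Q.card ≤ B.card := by
        apply Finset.card_le_card_of_injOn
          (fun A => if h : (B ∩ (A \ U)).Nonempty then h.choose else hBne.choose)
        · intro A hA
          rw [hQ, Finset.mem_coe, Finset.mem_filter] at hA
          simp only [Finset.mem_coe, dif_pos hA.2]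
          exact (Finset.mem_inter.mp hA.2.choose_spec).1
        · intro A hA A' hA' heq
          simp only [hQ, coe_filter, Set.mem_setOf_eq] at hA hA'
          simp only [dif_pos hA.2, dif_pos hA'.2] at heq
          by_contra hne
          have h1 := hA.2.choose_spec
          have h2 := hA'.2.choose_spec
          rw [heq] at h1
          simp only [Finset.mem_inter, Finset.mem_sdiff] at h1 h2
          have : hA'.2.choose ∈ A ∩ A' := Finset.mem_inter.mpr ⟨h1.2.1, h2.2.1⟩
          rw [hPpair A hA.1 A' hA'.1 hne] at this
          exact h1.2.2 this
      rw [hF B hB] at this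
      exact this
    have hex : ∃ A ∈ P, A ∉ Q := by
      by_contra hc
      push_neg at hc
      have := Finset.card_le_card hc
      omega
    obtain ⟨A, hAP, hAQ⟩ := hex
    have hempty : B ∩ (A \ U) = ∅ := by
      rw [hQ, Finset.mem_filter] at hAQ
      push_neg at hAQ
      rw [← Finset.not_nonempty_iff_eq_empty]
      exact Finset.not_nonempty_iff_eq_empty.mpr (hAQ hAP)
    have hBA : B ∩ A = B ∩ U := by
      apply Finset.Subset.antisymm
      · intro x hx
        simp only [Finset.mem_inter] at hx ⊢
        refine ⟨hx.1, ?_⟩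
        by_contra hxU
        have : x ∈ B ∩ (A \ U) := by
          simp only [Finset.mem_inter, Finset.mem_sdiff]
          exact ⟨hx.1, hx.2, hxU⟩
        rw [hempty] at this
        exact absurd this (Finset.notMem_empty x)
      · exact Finset.inter_subset_inter (le_refl _) (hPmem A hAP).2
    have hne : B ≠ A := by
      intro hc
      exact hUB (hc ▸ (hPmem A hAP).2)
    rw [← hBA]
    exact hforb B hB A (hPmem A hAP).1 hne

/-- Two distinct sunflower cores intersect in at most t-1 points. -/
lemma cores_inter (F : Finset (Finset (Fin n))) (t : ℕ) (ht : 1 ≤ t)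
    (U₁ U₂ : Finset (Fin n)) (hU₁ : U₁.card = t+1) (hU₂ : U₂.card = t+1)
    (hne : U₁ ≠ U₂)
    (h1 : ∀ B ∈ F, (B ∩ U₁).card ≠ t)
    (P₂ : Finset (Finset (Fin n))) (hP₂ : P₂ ⊆ F.filter (fun A => U₂ ⊆ A))
    (hP₂card : P₂.card = 2*t+2)
    (hP₂pair : ∀ A ∈ P₂, ∀ B ∈ P₂, A ≠ B → A ∩ B = U₂) :
    (U₁ ∩ U₂).card + 1 ≤ t := by
  have hPmem : ∀ A ∈ P₂, A ∈ F ∧ U₂ ⊆ A := by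
    intro A hA
    have := hP₂ hA
    rw [Finset.mem_filter] at this
    exact this
  have hU₁ne : U₁.Nonempty := by rw [← Finset.card_pos, hU₁]; omega
  set Q := P₂.filter (fun A => ((A \ U₂) ∩ U₁).Nonempty) with hQ
  have hQcard : Q.card ≤ t+1 := by
    have : Q.card ≤ U₁.card := by
      apply Finset.card_le_card_of_injOn
        (fun A => if h : ((A \ U₂) ∩ U₁).Nonempty then h.choose else hU₁ne.choose)
      · intro A hA
        rw [hQ, Finset.mem_coe, Finset.mem_filter] at hA
        simp only [Finset.mem_coe, dif_pos hA.2]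
        exact (Finset.mem_inter.mp hA.2.choose_spec).2
      · intro A hA A' hA' heq
        simp only [hQ, coe_filter, Set.mem_setOf_eq] at hA hA'
        simp only [dif_pos hA.2, dif_pos hA'.2] at heq
        by_contra hcne
        have hh1 := hA.2.choose_spec
        have hh2 := hA'.2.choose_spec
        rw [heq] at hh1
        simp only [Finset.mem_inter, Finset.mem_sdiff] at hh1 hh2
        have : hA'.2.choose ∈ A ∩ A' := Finset.mem_inter.mpr ⟨hh1.1.1, hh2.1.1⟩
        rw [hP₂pair A hA.1 A' hA'.1 hcne] at this
        exact hh1.1.2 this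
    rw [hU₁] at this
    exact this
  have hex : ∃ A ∈ P₂, A ∉ Q := by
    by_contra hc
    push_neg at hc
    have := Finset.card_le_card hc
    omega
  obtain ⟨A, hAP, hAQ⟩ := hex
  have hempty : (A \ U₂) ∩ U₁ = ∅ := by
    rw [hQ, Finset.mem_filter] at hAQ
    push_neg at hAQ
    rw [← Finset.not_nonempty_iff_eq_empty]
    exact Finset.not_nonempty_iff_eq_empty.mpr (hAQ hAP)
  have hAU₁ : A ∩ U₁ = U₂ ∩ U₁ := by
    apply Finset.Subset.antisymm
    · intro x hx
      simp only [Finset.mem_inter] at hx ⊢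
      refine ⟨?_, hx.2⟩
      by_contra hxU
      have : x ∈ (A \ U₂) ∩ U₁ := by
        simp only [Finset.mem_inter, Finset.mem_sdiff]
        exact ⟨⟨hx.1, hxU⟩, hx.2⟩
      rw [hempty] at this
      exact absurd this (Finset.notMem_empty x)
    · exact Finset.inter_subset_inter (hPmem A hAP).2 (le_refl _)
  have hAcard := h1 A (hPmem A hAP).1
  rw [hAU₁] at hAcard
  have hle : (U₁ ∩ U₂).card ≤ t+1 := by
    calc (U₁ ∩ U₂).card ≤ U₁.card := Finset.card_le_card Finset.inter_subset_left
      _ = t+1 := hU₁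
  have hneq : (U₁ ∩ U₂).card ≠ t+1 := by
    intro hc
    apply hne
    have hsub : U₁ ⊆ U₂ := by
      have := Finset.eq_of_subset_of_card_le (Finset.inter_subset_left (s₂ := U₂) (s₁ := U₁))
        (by rw [hc, hU₁])
      intro x hx
      rw [← this] at hx
      exact (Finset.mem_inter.mp hx).2
    exact Finset.eq_of_subset_of_card_le hsub (by rw [hU₁, hU₂])
  rw [Finset.inter_comm] at hAcard
  omega

/-- Number-theoretic fact: if p is a prime dividing t+1, then p does not divide C(t+p, p-1). -/
lemma nt_fact (p t : ℕ) (hp : p.Prime) (hpt : p ∣ t+1) : ¬ p ∣ (t+p).choose (p-1) := by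
  haveI : Fact p.Prime := ⟨hp⟩
  have hp2 : 2 ≤ p := hp.two_le
  obtain ⟨m, hm⟩ := hpt
  have hm1 : 1 ≤ m := by nlinarith
  have htp : t + p = p * m + (p - 1) := by omega
  have hmod : (t+p) % p = p - 1 := by
    rw [htp, Nat.mul_add_mod]
    exact Nat.mod_eq_of_lt (by omega)
  have hkmod : (p-1) % p = p - 1 := Nat.mod_eq_of_lt (by omega)
  have hkdiv : (p-1) / p = 0 := Nat.div_eq_of_lt (by omega)
  have lucas := Choose.choose_modEq_choose_mod_mul_choose_div_nat
    (n := t+p) (k := p-1) (p := p)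
  rw [hmod, hkmod, hkdiv, Nat.choose_self, Nat.choose_zero_right, one_mul] at lucas
  intro hdvd
  have h0 : (t+p).choose (p-1) % p = 0 := Nat.dvd_iff_mod_eq_zero.mp hdvd
  have h1 : (1 : ℕ) % p = 1 := Nat.mod_eq_of_lt (by omega)
  unfold Nat.ModEq at lucas
  omega


/-- There is no perfect packing of (t+1)-sets covering all t-subsets of a (2t+1)-set. -/
lemma no_perfect_cover (t : ℕ) (ht : 1 ≤ t) (A : Finset (Fin n)) (hA : A.card = 2*t+1)
    (𝒞 : Finset (Finset (Fin n))) (hCsub : ∀ U ∈ 𝒞, U ⊆ A)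
    (hCcard : ∀ U ∈ 𝒞, U.card = t+1)
    (hCpair : ∀ U ∈ 𝒞, ∀ U' ∈ 𝒞, U ≠ U' → (U ∩ U').card + 1 ≤ t)
    (hcover : ∀ T ⊆ A, T.card = t → ∃ U ∈ 𝒞, T ⊆ U) : False := by
  set p := (t+1).minFac with hpdef
  have hp : p.Prime := Nat.minFac_prime (by omega)
  have hpdvd : p ∣ t+1 := Nat.minFac_dvd _
  have hple : p ≤ t+1 := Nat.le_of_dvd (by omega) hpdvd
  have hp2 : 2 ≤ p := hp.two_le
  obtain ⟨S, hSA, hScard⟩ := Finset.exists_subset_card_eq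
    (show t+1-p ≤ A.card by omega)
  have hSt : S.card ≤ t := by omega
  set Ts := (A.powersetCard t).filter (fun T => S ⊆ T) with hTs
  have hTscard : Ts.card = (t+p).choose (p-1) := by
    rw [hTs, card_between S A hSA t hSt, hA, hScard]
    congr 1 <;> omega
  set 𝒞' := 𝒞.filter (fun U => S ⊆ U) with hC'
  have hfib : ∀ U ∈ 𝒞', ((U.powersetCard t).filter (fun T => S ⊆ T)).card = p := by
    intro U hU
    rw [hC', Finset.mem_filter] at hU
    rw [card_between S U hU.2 t hSt, hCcard U hU.1, hScard]
    have h1 : t+1 - (t+1-p) = p := by omega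
    have h2 : t - (t+1-p) = p-1 := by omega
    rw [h1, h2, Nat.choose_symm (by omega)]
    exact Nat.choose_one_right p
  have hunion : Ts = 𝒞'.biUnion (fun U => (U.powersetCard t).filter (fun T => S ⊆ T)) := by
    apply Finset.Subset.antisymm
    · intro T hT
      rw [hTs, Finset.mem_filter, Finset.mem_powersetCard] at hT
      obtain ⟨⟨hTA, hTcard⟩, hST⟩ := hT
      obtain ⟨U, hUC, hTU⟩ := hcover T hTA hTcard
      rw [Finset.mem_biUnion]
      refine ⟨U, ?_, ?_⟩
      · rw [hC', Finset.mem_filter]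
        exact ⟨hUC, hST.trans hTU⟩
      · rw [Finset.mem_filter, Finset.mem_powersetCard]
        exact ⟨⟨hTU, hTcard⟩, hST⟩
    · intro T hT
      rw [Finset.mem_biUnion] at hT
      obtain ⟨U, hUC', hTU⟩ := hT
      rw [Finset.mem_filter, Finset.mem_powersetCard] at hTU
      rw [hC', Finset.mem_filter] at hUC'
      rw [hTs, Finset.mem_filter, Finset.mem_powersetCard]
      exact ⟨⟨hTU.1.1.trans (hCsub U hUC'.1), hTU.1.2⟩, hTU.2⟩
  have hdisj : ∀ U ∈ 𝒞', ∀ U' ∈ 𝒞', U ≠ U' →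
      Disjoint ((U.powersetCard t).filter (fun T => S ⊆ T))
        ((U'.powersetCard t).filter (fun T => S ⊆ T)) := by
    intro U hU U' hU' hne
    rw [hC', Finset.mem_filter] at hU hU'
    rw [Finset.disjoint_left]
    intro T hT hT'
    rw [Finset.mem_filter, Finset.mem_powersetCard] at hT hT'
    have : T ⊆ U ∩ U' := Finset.subset_inter hT.1.1 hT'.1.1
    have hc := Finset.card_le_card this
    rw [hT.1.2] at hc
    have := hCpair U hU.1 U' hU'.1 hne
    omega
  have hcount : Ts.card = 𝒞'.card * p := by
    rw [hunion, Finset.card_biUnion hdisj]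
    rw [Finset.sum_congr rfl hfib, Finset.sum_const, smul_eq_mul]
  have : p ∣ (t+p).choose (p-1) := by
    rw [← hTscard, hcount]
    exact Dvd.intro_left _ rfl
  exact nt_fact p t hp hpdvd this
section TEST
open Finset
variable {n : ℕ}

lemma forbidden_inter_bound (F : Finset (Finset (Fin n))) (t : ℕ) (ht : 1 ≤ t)
    (hF : ∀ A ∈ F, A.card = 2*t+1)
    (hforb : ∀ A ∈ F, ∀ B ∈ F, A ≠ B → (A ∩ B).card ≠ t) :
    F.card ≤ n.choose t * ((2*t+2)^2 * (n.choose (t-1) + 1)) := by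
  rcases F.eq_empty_or_nonempty with hFe | ⟨A₀, hA₀⟩
  · simp [hFe]
  have hy₀ : (A₀ : Finset (Fin n)).Nonempty := by
    rw [← Finset.card_pos, hF A₀ hA₀]; omega
  obtain ⟨y₀, _⟩ := hy₀
  set D₂ := (2*t+2)^2 * (n.choose (t-1) + 1) with hD₂
  set deg := fun V : Finset (Fin n) => (F.filter (fun A => V ⊆ A)).card with hdeg
  set Tsets := (univ : Finset (Fin n)).powersetCard t with hTsets
  -- total double count
  have htot : ∀ G : Finset (Finset (Fin n)), G ⊆ Tsets →
      ∑ T ∈ G, deg T = ∑ A ∈ F, (G.filter (fun T => T ⊆ A)).card := by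
    intro G hG
    simp only [hdeg, Finset.card_filter]
    rw [Finset.sum_comm]
  have hmemT : ∀ A ∈ F, Tsets.filter (fun T => T ⊆ A) = A.powersetCard t := by
    intro A hA
    ext T
    simp only [hTsets, Finset.mem_filter, Finset.mem_powersetCard]
    constructor
    · rintro ⟨⟨_, h2⟩, h3⟩; exact ⟨h3, h2⟩
    · rintro ⟨h1, h2⟩; exact ⟨⟨Finset.subset_univ T, h2⟩, h1⟩
  have htotal : ∑ T ∈ Tsets, deg T = F.card * (2*t+1).choose t := by
    rw [htot Tsets (le_refl _)]
    have : ∀ A ∈ F, (Tsets.filter (fun T => T ⊆ A)).card = (2*t+1).choose t := by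
      intro A hA
      rw [hmemT A hA, Finset.card_powersetCard, hF A hA]
    rw [Finset.sum_congr rfl this, Finset.sum_const, smul_eq_mul]
  set Heavy := Tsets.filter (fun T => D₂ ≤ deg T) with hHeavy
  -- every heavy t-set has a star point
  have hstar : ∀ T ∈ Heavy, ∃ x, x ∉ T ∧ ∀ A ∈ F, T ⊆ A → x ∈ A := by
    intro T hT
    rw [hHeavy, Finset.mem_filter] at hT
    obtain ⟨hTmem, hTdeg⟩ := hT
    rw [hTsets, Finset.mem_powersetCard] at hTmem
    set FT := F.filter (fun A => T ⊆ A) with hFT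
    have hFTu : ∀ A ∈ FT, A.card = 2*t+1 := by
      intro A hA; exact hF A (Finset.mem_filter.mp hA).1
    have hFTt : ∀ A ∈ FT, T ⊆ A := fun A hA => (Finset.mem_filter.mp hA).2
    have hint : ∀ A ∈ FT, ∀ B ∈ FT, ((A \ T) ∩ (B \ T)).Nonempty := by
      intro A hA B hB
      rw [hFT, Finset.mem_filter] at hA hB
      have hsd : (A \ T) ∩ (B \ T) = (A ∩ B) \ T := by
        ext x; simp only [Finset.mem_inter, Finset.mem_sdiff]; tauto
      rw [hsd, ← Finset.card_pos, Finset.card_sdiff_of_subset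
        (Finset.subset_inter hA.2 hB.2)]
      have h1 : t ≤ (A ∩ B).card := by
        calc t = T.card := hTmem.2.symm
          _ ≤ (A ∩ B).card := Finset.card_le_card (Finset.subset_inter hA.2 hB.2)
      rcases eq_or_ne A B with rfl | hne
      · rw [Finset.inter_self]
        rw [hF A hA.1]
        omega
      · have := hforb A hA.1 B hB.1 hne
        omega
    rcases star_dichotomy FT (2*t+1) T hFTu hFTt hint with hsmall | ⟨x, hx1, hx2⟩
    · exfalso
      rw [hTmem.2] at hsmall
      rw [show 2*t+1-t-2 = t-1 by omega, show 2*t+1-t = t+1 by omega] at hsmall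
      have hb3 : (n-2).choose (t-1) ≤ n.choose (t-1) := Nat.choose_le_choose _ (by omega)
      have hb4 : FT.card = deg T := rfl
      have hc : D₂ ≤ (t+1)^2 * (n-2).choose (t-1) := le_trans hTdeg (by omega)
      rw [hD₂] at hc
      nlinarith [Nat.zero_le ((n-2).choose (t-1)), hb3]
    · exact ⟨x, hx1, fun A hA hTA => hx2 A (Finset.mem_filter.mpr ⟨hA, hTA⟩)⟩
  have hax : ∀ T : Finset (Fin n), ∃ x,
      T ∈ Heavy → (x ∉ T ∧ ∀ A ∈ F, T ⊆ A → x ∈ A) := by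
    intro T
    by_cases h : T ∈ Heavy
    · obtain ⟨x, hx⟩ := hstar T h
      exact ⟨x, fun _ => hx⟩
    · exact ⟨y₀, fun hc => absurd hc h⟩
  choose xf hxf using hax
  set Uf := fun T : Finset (Fin n) => insert (xf T) T with hUf
  have hTcard : ∀ T ∈ Heavy, T.card = t := by
    intro T hT
    rw [hHeavy, Finset.mem_filter, hTsets, Finset.mem_powersetCard] at hT
    exact hT.1.2
  have hUcard : ∀ T ∈ Heavy, (Uf T).card = t+1 := by
    intro T hT
    rw [hUf, Finset.card_insert_of_notMem (hxf T hT).1, hTcard T hT]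
  have hUsub : ∀ T ∈ Heavy, ∀ A ∈ F, T ⊆ A → Uf T ⊆ A := by
    intro T hT A hA hTA
    rw [hUf]
    exact Finset.insert_subset ((hxf T hT).2 A hA hTA) hTA
  have hUdeg : ∀ T ∈ Heavy, D₂ ≤ deg (Uf T) := by
    intro T hT
    have h1 : F.filter (fun A => T ⊆ A) ⊆ F.filter (fun A => Uf T ⊆ A) := by
      intro A hA
      rw [Finset.mem_filter] at hA ⊢
      exact ⟨hA.1, hUsub T hT A hA.1 hA.2⟩
    have h2 : deg T ≤ deg (Uf T) := Finset.card_le_card h1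
    have h3 : D₂ ≤ deg T := by
      rw [hHeavy, Finset.mem_filter] at hT
      exact hT.2
    omega
  -- sunflower at each heavy core
  have hsun : ∀ T ∈ Heavy, ∃ P ⊆ F.filter (fun A => Uf T ⊆ A), P.card = 2*t+2 ∧
      ∀ A ∈ P, ∀ B ∈ P, A ≠ B → A ∩ B = Uf T := by
    intro T hT
    apply exists_sunflower F t ht hF (Uf T) (hUcard T hT)
    have := hUdeg T hT
    have hkey : (2*t+2) * (t * n.choose (t-1) + 1) ≤ D₂ := by
      rw [hD₂]
      nlinarith [Nat.zero_le (n.choose (t-1))]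
    exact le_trans hkey this
  have hkey1 : ∀ T ∈ Heavy, ∀ B ∈ F, (B ∩ Uf T).card ≠ t := by
    intro T hT
    obtain ⟨P, hP1, hP2, hP3⟩ := hsun T hT
    exact core_forbidden F t ht hF hforb (Uf T) (hUcard T hT) P hP1 hP2 hP3
  have hkey2 : ∀ T ∈ Heavy, ∀ T' ∈ Heavy, Uf T ≠ Uf T' →
      (Uf T ∩ Uf T').card + 1 ≤ t := by
    intro T hT T' hT' hne
    obtain ⟨P, hP1, hP2, hP3⟩ := hsun T' hT'
    apply cores_inter F t ht (Uf T) (Uf T') (hUcard T hT) (hUcard T' hT') hne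
      (hkey1 T hT) P hP1 hP2 hP3
  -- per-member bound on heavy T's inside a member
  have hperA : ∀ A ∈ F, (Heavy.filter (fun T => T ⊆ A)).card + 1 ≤ (2*t+1).choose t := by
    intro A hA
    set HA := Heavy.filter (fun T => T ⊆ A) with hHA
    set CA := HA.image Uf with hCAdef
    have hHAmem : ∀ T ∈ HA, T ∈ Heavy ∧ T ⊆ A := by
      intro T hT; exact Finset.mem_filter.mp hT
    have hCAprops : ∀ U ∈ CA, U ⊆ A ∧ U.card = t+1 ∧ (∀ B ∈ F, (B ∩ U).card ≠ t) := by
      intro U hU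
      rw [hCAdef, Finset.mem_image] at hU
      obtain ⟨T, hT, rfl⟩ := hU
      obtain ⟨hTH, hTA⟩ := hHAmem T hT
      exact ⟨hUsub T hTH A hA hTA, hUcard T hTH, hkey1 T hTH⟩
    have hCApair : ∀ U ∈ CA, ∀ U' ∈ CA, U ≠ U' → (U ∩ U').card + 1 ≤ t := by
      intro U hU U' hU' hne
      rw [hCAdef, Finset.mem_image] at hU hU'
      obtain ⟨T, hT, rfl⟩ := hU
      obtain ⟨T', hT', rfl⟩ := hU'
      exact hkey2 T (hHAmem T hT).1 T' (hHAmem T' hT').1 hne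
    set Cov := CA.biUnion (fun U => U.powersetCard t) with hCovdef
    have hHACov : HA ⊆ Cov := by
      intro T hT
      rw [hCovdef, Finset.mem_biUnion]
      refine ⟨Uf T, ?_, ?_⟩
      · rw [hCAdef]; exact Finset.mem_image_of_mem Uf hT
      · rw [Finset.mem_powersetCard]
        exact ⟨Finset.subset_insert _ _, hTcard T (hHAmem T hT).1⟩
    have hCovA : Cov ⊆ A.powersetCard t := by
      intro T hT
      rw [hCovdef, Finset.mem_biUnion] at hT
      obtain ⟨U, hU, hTU⟩ := hT
      rw [Finset.mem_powersetCard] at hTU ⊢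
      exact ⟨hTU.1.trans (hCAprops U hU).1, hTU.2⟩
    have hCovne : Cov ≠ A.powersetCard t := by
      intro hc
      apply no_perfect_cover t ht A (hF A hA) CA
        (fun U hU => (hCAprops U hU).1) (fun U hU => (hCAprops U hU).2.1) hCApair
      intro T hTA hTcard'
      have : T ∈ Cov := by
        rw [hc, Finset.mem_powersetCard]
        exact ⟨hTA, hTcard'⟩
      rw [hCovdef, Finset.mem_biUnion] at this
      obtain ⟨U, hU, hTU⟩ := this
      exact ⟨U, hU, (Finset.mem_powersetCard.mp hTU).1⟩
    have hlt : Cov.card < (2*t+1).choose t := by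
      have h1 : Cov ⊂ A.powersetCard t := ssubset_of_subset_of_ne hCovA hCovne
      have h2 := Finset.card_lt_card h1
      rwa [Finset.card_powersetCard, hF A hA] at h2
    have := Finset.card_le_card hHACov
    omega
  -- final count
  have hC1 : 1 ≤ (2*t+1).choose t := Nat.choose_pos (by omega)
  have hsplit : ∑ T ∈ Heavy, deg T +
      ∑ T ∈ Tsets.filter (fun T => ¬ D₂ ≤ deg T), deg T = ∑ T ∈ Tsets, deg T :=
    Finset.sum_filter_add_sum_filter_not Tsets _ deg
  have hlight : ∑ T ∈ Tsets.filter (fun T => ¬ D₂ ≤ deg T), deg T ≤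
      n.choose t * D₂ := by
    calc ∑ T ∈ Tsets.filter (fun T => ¬ D₂ ≤ deg T), deg T
        ≤ ∑ _T ∈ Tsets.filter (fun T => ¬ D₂ ≤ deg T), D₂ := by
          apply Finset.sum_le_sum
          intro T hT
          have := (Finset.mem_filter.mp hT).2
          omega
      _ = (Tsets.filter (fun T => ¬ D₂ ≤ deg T)).card * D₂ := by
          rw [Finset.sum_const, smul_eq_mul]
      _ ≤ n.choose t * D₂ := by
          apply Nat.mul_le_mul_right
          calc (Tsets.filter (fun T => ¬ D₂ ≤ deg T)).card ≤ Tsets.card :=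
              Finset.card_le_card (Finset.filter_subset _ _)
            _ = n.choose t := by
              rw [hTsets, Finset.card_powersetCard, Finset.card_univ, Fintype.card_fin]
  have hheavy : ∑ T ∈ Heavy, deg T ≤ F.card * ((2*t+1).choose t - 1) := by
    rw [htot Heavy (Finset.filter_subset _ _)]
    calc ∑ A ∈ F, (Heavy.filter (fun T => T ⊆ A)).card
        ≤ ∑ _A ∈ F, ((2*t+1).choose t - 1) := by
          apply Finset.sum_le_sum
          intro A hA
          have := hperA A hA
          omega
      _ = F.card * ((2*t+1).choose t - 1) := by rw [Finset.sum_const, smul_eq_mul]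
  obtain ⟨c, hc⟩ : ∃ c, (2*t+1).choose t = c + 1 := ⟨(2*t+1).choose t - 1, by omega⟩
  have hfinal : F.card * (c+1) ≤ F.card * c + n.choose t * D₂ := by
    rw [← hc]
    calc F.card * (2*t+1).choose t = ∑ T ∈ Tsets, deg T := htotal.symm
      _ = ∑ T ∈ Heavy, deg T + ∑ T ∈ Tsets.filter (fun T => ¬ D₂ ≤ deg T), deg T :=
        hsplit.symm
      _ ≤ F.card * ((2*t+1).choose t - 1) + n.choose t * D₂ :=
        Nat.add_le_add hheavy hlight
      _ = F.card * c + n.choose t * D₂ := by rw [hc]; simp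
  rw [Nat.mul_succ] at hfinal
  exact le_of_add_le_add_left hfinal
end TEST
section TEST2
open Finset

lemma numeric_bound (t n : ℕ) (ht : 1 ≤ t)
    (hn : 4*(2*t+2)^2 * (2*t).factorial * 2^(2*t) + 4*t + 4 ≤ n) :
    2 * (n.choose t * ((2*t+2)^2 * (n.choose (t-1) + 1))) < (n-2).choose (2*t) := by
  set K := 4*(2*t+2)^2 * (2*t).factorial * 2^(2*t) with hK
  have hn1 : 1 ≤ n := by omega
  have h1 : n.choose t ≤ n^t := Nat.choose_le_pow n t
  have h2 : n.choose (t-1) + 1 ≤ 2 * n^(t-1) := by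
    have := Nat.choose_le_pow n (t-1)
    have hp : 1 ≤ n^(t-1) := Nat.one_le_pow _ _ (by omega)
    omega
  have hLHS : 2 * (n.choose t * ((2*t+2)^2 * (n.choose (t-1) + 1))) ≤
      4*(2*t+2)^2 * (n^t * n^(t-1)) := by
    calc 2 * (n.choose t * ((2*t+2)^2 * (n.choose (t-1) + 1)))
        ≤ 2 * (n^t * ((2*t+2)^2 * (2 * n^(t-1)))) := by
          apply Nat.mul_le_mul_left
          exact Nat.mul_le_mul h1 (Nat.mul_le_mul_left _ h2)
      _ = 4*(2*t+2)^2 * (n^t * n^(t-1)) := by ring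
  have hpow : n^t * n^(t-1) = n^(2*t-1) := by
    rw [← pow_add]
    congr 1
    omega
  -- key chain
  have hchain : 4*(2*t+2)^2 * n^(2*t-1) * ((2*t).factorial * 2^(2*t)) < n^(2*t) := by
    have hKn : K < n := by omega
    have hppos : 0 < n^(2*t-1) := Nat.pow_pos (by omega)
    calc 4*(2*t+2)^2 * n^(2*t-1) * ((2*t).factorial * 2^(2*t))
        = K * n^(2*t-1) := by rw [hK]; ring
      _ < n * n^(2*t-1) := (Nat.mul_lt_mul_right hppos).mpr hKn
      _ = n^(2*t) := by
          rw [← pow_succ']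
          congr 1
          omega
  have hup : n^(2*t) ≤ 2^(2*t) * ((2*t).factorial * (n-2).choose (2*t)) := by
    have hle : n ≤ 2 * (n-1-2*t) := by omega
    calc n^(2*t) ≤ (2 * (n-1-2*t))^(2*t) := Nat.pow_le_pow_left hle _
      _ = 2^(2*t) * (n-1-2*t)^(2*t) := by rw [mul_pow]
      _ ≤ 2^(2*t) * ((2*t).factorial * (n-2).choose (2*t)) := by
          apply Nat.mul_le_mul_left
          have := Nat.pow_sub_le_descFactorial (n-2) (2*t)
          rw [Nat.descFactorial_eq_factorial_mul_choose] at this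
          have heq : n - 2 + 1 - 2*t = n - 1 - 2*t := by omega
          rwa [heq] at this
  -- combine
  have hfin : 4*(2*t+2)^2 * n^(2*t-1) * ((2*t).factorial * 2^(2*t)) <
      ((2*t).factorial * 2^(2*t)) * (n-2).choose (2*t) := by
    calc 4*(2*t+2)^2 * n^(2*t-1) * ((2*t).factorial * 2^(2*t)) < n^(2*t) := hchain
      _ ≤ 2^(2*t) * ((2*t).factorial * (n-2).choose (2*t)) := hup
      _ = ((2*t).factorial * 2^(2*t)) * (n-2).choose (2*t) := by ring
  have hcancel : 4*(2*t+2)^2 * n^(2*t-1) < (n-2).choose (2*t) := by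
    have hMpos : 0 < (2*t).factorial * 2^(2*t) :=
      Nat.mul_pos (Nat.factorial_pos _) (Nat.pow_pos (by omega))
    by_contra hc
    push_neg at hc
    have := Nat.mul_le_mul_left ((2*t).factorial * 2^(2*t)) hc
    nlinarith [hfin]
  calc 2 * (n.choose t * ((2*t+2)^2 * (n.choose (t-1) + 1)))
      ≤ 4*(2*t+2)^2 * (n^t * n^(t-1)) := hLHS
    _ = 4*(2*t+2)^2 * n^(2*t-1) := by rw [hpow]
    _ < (n-2).choose (2*t) := hcancel
end TEST2
section TEST3
open Finset
variable {n : ℕ}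

lemma fin_contra (k t : ℕ) (hkt : k = 2*t+2) (ht : 1 ≤ t)
    (hn : 4*(2*t+2)^2 * (2*t).factorial * 2^(2*t) + 4*t + 4 ≤ n)
    (F : Finset (Finset (Fin n)))
    (hFu : ∀ a ∈ F, a.card = k)
    (hint : ∀ a ∈ F, ∀ b ∈ F, (a ∩ b).Nonempty ∧ (a ∩ b).card ≠ k/2)
    (hsize : k^2 * (n-2).choose (k-2) ≤ 2 * F.card) : False := by
  have hk2t : k - 2 = 2*t := by omega
  have hk2 : k/2 = t+1 := by omega
  rw [hk2t] at hsize
  set C := (n-2).choose (2*t) with hC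
  have hCpos : 0 < C := Nat.choose_pos (by omega)
  have hFne : F.Nonempty := by
    rw [← Finset.card_pos]
    have hk2pos : 0 < k^2 := Nat.pow_pos (by omega)
    nlinarith
  obtain ⟨a₀, ha₀⟩ := hFne
  have ha₀ne : a₀.Nonempty := by
    rw [← Finset.card_pos, hFu a₀ ha₀]; omega
  -- max degree vertex of a₀
  obtain ⟨v, hva₀, hvmax⟩ := Finset.exists_max_image a₀
    (fun u => (F.filter (fun a => u ∈ a)).card) ha₀ne
  set dv := (F.filter (fun a => v ∈ a)).card with hdv
  have hcover : F ⊆ a₀.biUnion (fun u => F.filter (fun a => u ∈ a)) := by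
    intro a ha
    obtain ⟨u, hu⟩ := (hint a ha a₀ ha₀).1
    rw [Finset.mem_inter] at hu
    rw [Finset.mem_biUnion]
    exact ⟨u, hu.2, Finset.mem_filter.mpr ⟨ha, hu.1⟩⟩
  have hdeg : F.card ≤ k * dv := by
    calc F.card ≤ (a₀.biUnion (fun u => F.filter (fun a => u ∈ a))).card :=
        Finset.card_le_card hcover
      _ ≤ ∑ u ∈ a₀, (F.filter (fun a => u ∈ a)).card := Finset.card_biUnion_le
      _ ≤ ∑ _u ∈ a₀, dv := Finset.sum_le_sum (fun u hu => hvmax u hu)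
      _ = k * dv := by rw [Finset.sum_const, hFu a₀ ha₀, smul_eq_mul]
  -- pass to the link of v
  set F'' := (F.filter (fun a => v ∈ a)).image (fun a => a.erase v) with hF''
  have hcard'' : F''.card = dv := by
    rw [hF'']
    apply Finset.card_image_of_injOn
    intro a ha b hb hab
    simp only [coe_filter, Set.mem_setOf_eq] at ha hb
    simp only [] at hab
    rw [← Finset.insert_erase ha.2, ← Finset.insert_erase hb.2, hab]
  have hu'' : ∀ X ∈ F'', X.card = 2*t+1 := by
    intro X hX
    rw [hF'', Finset.mem_image] at hX
    obtain ⟨a, ha, rfl⟩ := hX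
    rw [Finset.mem_filter] at ha
    rw [Finset.card_erase_of_mem ha.2, hFu a ha.1]
    omega
  have hforb'' : ∀ X ∈ F'', ∀ Y ∈ F'', X ≠ Y → (X ∩ Y).card ≠ t := by
    intro X hX Y hY hXY
    rw [hF'', Finset.mem_image] at hX hY
    obtain ⟨a, ha, rfl⟩ := hX
    obtain ⟨b, hb, rfl⟩ := hY
    rw [Finset.mem_filter] at ha hb
    have hab : a ≠ b := by
      intro hc
      exact hXY (by rw [hc])
    have hv : v ∈ a ∩ b := Finset.mem_inter.mpr ⟨ha.2, hb.2⟩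
    have hinter : a.erase v ∩ b.erase v = (a ∩ b).erase v := by
      ext x
      simp only [Finset.mem_inter, Finset.mem_erase]
      tauto
    rw [hinter, Finset.card_erase_of_mem hv]
    have h1 := (hint a ha.1 b hb.1).1
    have h2 := (hint a ha.1 b hb.1).2
    rw [hk2] at h2
    rw [← Finset.card_pos] at h1
    omega
  have hL5 := forbidden_inter_bound F'' t ht hu'' hforb''
  have hnum := numeric_bound t n ht hn
  set X := n.choose t * ((2*t+2)^2 * (n.choose (t-1) + 1)) with hX
  -- combine everything
  have hchain : k * (k * C) ≤ k * (2 * X) := by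
    calc k * (k * C) = k^2 * C := by ring
      _ ≤ 2 * F.card := hsize
      _ ≤ 2 * (k * dv) := by omega
      _ = k * (2 * dv) := by ring
      _ ≤ k * (2 * X) := by
          apply Nat.mul_le_mul_left
          have : dv ≤ X := by rw [← hcard'']; exact hL5
          omega
  have hkpos : 0 < k := by omega
  have hfin : k * C ≤ 2 * X := Nat.le_of_mul_le_mul_left hchain hkpos
  have hCk : C ≤ k * C := Nat.le_mul_of_pos_left C hkpos
  omega
end TEST3
section MAIN
open Finset

theorem three_edges_exist (k : ℕ) (hk : Even k) (hk4 : 4 ≤ k) :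
    ∃ n₀ : ℕ, ∀ n ≥ n₀, ∀ H : Finset (Finset (Fin n)),
      (∀ e ∈ H, e.card = k) →
      2 * k ^ 2 * Nat.choose (n - 2) (k - 2) ≤ H.card →
      (¬ ∃ v : Fin n, ∀ e ∈ H, v ∈ e) →
      ∃ e₁ ∈ H, ∃ e₂ ∈ H, ∃ e₃ ∈ H,
        e₁ ∩ (e₂ ∪ e₃) = ∅ ∧ ((e₂ ∩ e₃).card = 0 ∨ (e₂ ∩ e₃).card = k / 2) := by
  obtain ⟨m, hm⟩ := hk
  set t := m - 1 with htdef
  have hkt : k = 2*t+2 := by omega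
  have ht : 1 ≤ t := by omega
  refine ⟨4*(2*t+2)^2 * (2*t).factorial * 2^(2*t) + 4*t + 4, ?_⟩
  intro n hn H hHu hHcard hHstar
  by_contra hGOAL
  push_neg at hGOAL
  set C := (n-2).choose (k-2) with hC
  have hCpos : 0 < C := Nat.choose_pos (by omega)
  -- Step 1: find two disjoint edges
  have hdisj : ∃ e ∈ H, ∃ f ∈ H, e ∩ f = ∅ := by
    by_contra hc
    push_neg at hc
    have hint : ∀ A ∈ H, ∀ B ∈ H, ((A \ (∅ : Finset (Fin n))) ∩ (B \ ∅)).Nonempty := by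
      intro A hA B hB
      rw [Finset.sdiff_empty, Finset.sdiff_empty]
      rw [Finset.nonempty_iff_ne_empty]
      exact Finset.nonempty_iff_ne_empty.mp (hc A hA B hB)
    rcases star_dichotomy H k ∅ hHu (fun A _ => Finset.empty_subset A) hint with
      hsmall | ⟨x, _, hx⟩
    · simp only [Finset.card_empty, Nat.sub_zero] at hsmall
      have h1 : 2 * (k^2 * (n-2).choose (k-2)) ≤ H.card := by
        calc 2 * (k^2 * (n-2).choose (k-2)) = 2 * k^2 * (n-2).choose (k-2) := by ring
          _ ≤ H.card := hHcard
      have hMpos : 0 < k^2 * (n-2).choose (k-2) :=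
        Nat.mul_pos (Nat.pow_pos (by omega)) hCpos
      omega
    · exact hHstar ⟨x, hx⟩
  obtain ⟨e, he, f, hf, hef⟩ := hdisj
  -- partition of H
  set A := H.filter (fun a => a ∩ f = ∅) with hA
  set B := H.filter (fun b => b ∩ e = ∅ ∧ (b ∩ f).Nonempty) with hB
  set Cm := H.filter (fun g => (g ∩ e).Nonempty ∧ (g ∩ f).Nonempty) with hCm
  have hcover : H ⊆ A ∪ B ∪ Cm := by
    intro g hg
    simp only [hA, hB, hCm, Finset.mem_union, Finset.mem_filter]
    by_cases h1 : g ∩ f = ∅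
    · exact Or.inl (Or.inl ⟨hg, h1⟩)
    · replace h1 := Finset.nonempty_iff_ne_empty.mpr h1
      by_cases h2 : g ∩ e = ∅
      · exact Or.inl (Or.inr ⟨hg, h2, h1⟩)
      · replace h2 := Finset.nonempty_iff_ne_empty.mpr h2
        exact Or.inr ⟨hg, h2, h1⟩
  -- bound on Cm
  have hCmcard : Cm.card ≤ k^2 * C := by
    have hcov2 : Cm ⊆ e.biUnion (fun u => f.biUnion
        (fun w => H.filter (fun g => insert u {w} ⊆ g))) := by
      intro g hg
      rw [hCm, Finset.mem_filter] at hg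
      obtain ⟨hgH, ⟨u, hu⟩, ⟨w, hw⟩⟩ := hg
      rw [Finset.mem_inter] at hu hw
      rw [Finset.mem_biUnion]
      refine ⟨u, hu.2, ?_⟩
      rw [Finset.mem_biUnion]
      refine ⟨w, hw.2, ?_⟩
      rw [Finset.mem_filter]
      refine ⟨hgH, ?_⟩
      intro x hx
      simp only [Finset.mem_insert, Finset.mem_singleton] at hx
      rcases hx with rfl | rfl
      · exact hu.1
      · exact hw.1
    calc Cm.card ≤ ∑ u ∈ e, (f.biUnion
          (fun w => H.filter (fun g => insert u {w} ⊆ g))).card :=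
        le_trans (Finset.card_le_card hcov2) Finset.card_biUnion_le
      _ ≤ ∑ u ∈ e, ∑ w ∈ f, (H.filter (fun g => insert u {w} ⊆ g)).card :=
        Finset.sum_le_sum (fun u _ => Finset.card_biUnion_le)
      _ ≤ ∑ u ∈ e, ∑ w ∈ f, C := by
        apply Finset.sum_le_sum
        intro u hu
        apply Finset.sum_le_sum
        intro w hw
        have huw : u ≠ w := by
          intro hc
          have : u ∈ e ∩ f := Finset.mem_inter.mpr ⟨hu, hc ▸ hw⟩
          rw [hef] at this
          exact absurd this (Finset.notMem_empty u)
        have hVcard : (insert u ({w} : Finset (Fin n))).card = 2 := by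
          rw [Finset.card_insert_of_notMem (by simp [huw]), Finset.card_singleton]
        calc (H.filter (fun g => insert u {w} ⊆ g)).card
            ≤ (n - (insert u ({w} : Finset (Fin n))).card).choose
              (k - (insert u ({w} : Finset (Fin n))).card) :=
              count_supersets H k hHu _
          _ = C := by rw [hVcard, hC]
      _ = k^2 * C := by
        simp only [Finset.sum_const, smul_eq_mul, hHu f hf, hHu e he]
        ring
  -- A and B are intersecting and (k/2)-avoiding
  have hAprop : ∀ a ∈ A, ∀ a' ∈ A, (a ∩ a').Nonempty ∧ (a ∩ a').card ≠ k/2 := by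
    intro a ha a' ha'
    rw [hA, Finset.mem_filter] at ha ha'
    have hkey := hGOAL f hf a ha.1 a' ha'.1 (by
      rw [Finset.inter_union_distrib_left, Finset.inter_comm f a,
        Finset.inter_comm f a', ha.2, ha'.2]
      simp)
    refine ⟨?_, hkey.2⟩
    rw [Finset.nonempty_iff_ne_empty]
    intro hcc
    exact hkey.1 (by rw [hcc, Finset.card_empty])
  have hBprop : ∀ b ∈ B, ∀ b' ∈ B, (b ∩ b').Nonempty ∧ (b ∩ b').card ≠ k/2 := by
    intro b hb b' hb'
    rw [hB, Finset.mem_filter] at hb hb'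
    have hkey := hGOAL e he b hb.1 b' hb'.1 (by
      rw [Finset.inter_union_distrib_left, Finset.inter_comm e b,
        Finset.inter_comm e b', hb.2.1, hb'.2.1]
      simp)
    refine ⟨?_, hkey.2⟩
    rw [Finset.nonempty_iff_ne_empty]
    intro hcc
    exact hkey.1 (by rw [hcc, Finset.card_empty])
  -- size bound
  have hsum : k^2 * C ≤ A.card + B.card := by
    have h1 : H.card ≤ A.card + B.card + Cm.card := by
      calc H.card ≤ (A ∪ B ∪ Cm).card := Finset.card_le_card hcover
        _ ≤ (A ∪ B).card + Cm.card := Finset.card_union_le _ _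
        _ ≤ A.card + B.card + Cm.card := by
            have := Finset.card_union_le A B
            omega
    have h2 : 2 * (k^2 * C) ≤ H.card := by
      calc 2 * (k^2 * C) = 2 * k^2 * C := by ring
        _ ≤ H.card := hHcard
    omega
  -- apply fin_contra to the bigger of A, B
  have hAu : ∀ a ∈ A, a.card = k := fun a ha => hHu a (Finset.mem_filter.mp ha).1
  have hBu : ∀ b ∈ B, b.card = k := fun b hb => hHu b (Finset.mem_filter.mp hb).1
  rcases le_total A.card B.card with hab | hab
  · exact fin_contra k t hkt ht hn B hBu hBprop (by rw [← hC]; omega)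
  · exact fin_contra k t hkt ht hn A hAu hAprop (by rw [← hC]; omega)
end MAIN
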